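/- arXiv:1801.07003 — 6 statements merged into one kernel-verified Lean document; each statement's English description precedes it below -/
import Mathlib

section
/- Let F_{s₀} ⊊ F_{s₁} ⊊ ... ⊊ F_{s_ℓ} = F_q be a chain of subfields, let k < n ≤ s₀, let α₁,...,αₙ be distinct elements of F_{s₀}, and let η_i ∈ F_{s_i} \ F_{s_{i−1}} for i = 1,...,ℓ. Then the twisted Reed–Solomon code C^{n,k}(α,t,h,η) is MDS, i.e., its minimum distance equals n − k + 1. -/
open Polynomial

noncomputable def evalVec {F : Type*} [Field F] {n : ℕ} (α : Fin n → F) :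
    F[X] →ₗ[F] (Fin n → F) :=
  LinearMap.pi fun i => Polynomial.leval (α i)

/-- The set of (t,h,η)-twisted polynomials: all `∑_{i<k} f_i Xⁱ + ∑_j η_j f_{h_j} X^{k-1+t_j}`. -/
noncomputable def twistedSet {F : Type*} [Field F] (k ℓ : ℕ) (t h : Fin ℓ → ℕ)
    (η : Fin ℓ → F) : Set F[X] :=
  { g | ∃ f : ℕ → F,
      g = (∑ i ∈ Finset.range k, Polynomial.C (f i) * X ^ i)
        + ∑ j : Fin ℓ, Polynomial.C (η j * f (h j)) * X ^ (k - 1 + t j) }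

/-- The twisted Reed–Solomon code: evaluation of the twisted polynomials at `α`. -/
noncomputable def twistedCode {F : Type*} [Field F] (n k ℓ : ℕ) (α : Fin n → F)
    (t h : Fin ℓ → ℕ) (η : Fin ℓ → F) : Submodule F (Fin n → F) :=
  Submodule.span F (evalVec α '' twistedSet k ℓ t h η)

/-- Hamming weight of a vector. -/
noncomputable def wt {F : Type*} [Zero F] {n : ℕ} (x : Fin n → F) : ℕ :=
  Nat.card {i // x i ≠ 0}

/-- determinant of a matrix with entries in a subfield lies in the subfield -/
lemma det_mem_subfield {F : Type*} [Field F] {r : ℕ} (S : Subfield F)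
    (M : Matrix (Fin r) (Fin r) F) (h : ∀ i j, M i j ∈ S) : M.det ∈ S := by
  rw [Matrix.det_apply]
  refine Subfield.sum_mem S fun σ _ => ?_
  rw [Units.smul_def, zsmul_eq_mul]
  refine S.mul_mem ?_ (Subfield.prod_mem S fun i _ => h _ _)
  rcases Int.units_eq_one_or (Equiv.Perm.sign σ) with hs | hs <;> rw [hs] <;> simp <;>
    exact S.one_mem

lemma det_one_sub_ne_zero {F : Type*} [Field F] :
    ∀ (ℓ : ℕ) (K : Fin (ℓ + 1) → Subfield F), Monotone K →
      ∀ (a : Matrix (Fin ℓ) (Fin ℓ) F), (∀ i j, a i j ∈ K 0) →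
      ∀ (η : Fin ℓ → F), (∀ j : Fin ℓ, η j ∈ K j.succ) → (∀ j : Fin ℓ, η j ∉ K j.castSucc) →
      (1 - a * Matrix.diagonal η).det ≠ 0 := by
  intro ℓ
  induction ℓ with
  | zero =>
    intro K _ a _ η _ _
    rw [Matrix.det_fin_zero]
    exact one_ne_zero
  | succ m ih =>
    intro K hmono a ha η hη1 hη2
    set L : Fin (m + 1) := Fin.last m with hL
    set M : Matrix (Fin (m + 1)) (Fin (m + 1)) F := 1 - a * Matrix.diagonal η with hM
    -- the subfield at the second-to-top level
    set S : Subfield F := K L.castSucc with hS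
    have hK0S : K 0 ≤ S := hmono (Fin.zero_le _)
    have hKqS : ∀ q : Fin (m + 1), q ≠ L → K q.succ ≤ S := by
      intro q hq
      apply hmono
      have : (q : ℕ) < m := by
        rcases Fin.lt_last_iff_ne_last.mpr hq with h
        exact h
      simp [Fin.le_def, hL]
      omega
    -- decompose the last column
    have hcol : (fun j => M j L) = (fun j => if j = L then (1:F) else 0)
        + (-(η L)) • (fun j => a j L) := by
      funext j
      simp only [hM, Matrix.sub_apply, Matrix.one_apply, Matrix.mul_diagonal, Pi.add_apply,
        Pi.smul_apply, smul_eq_mul]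
      ring
    have hdet : M.det = (M.updateCol L (fun j => if j = L then (1:F) else 0)).det
        + (-(η L)) * (M.updateCol L (fun j => a j L)).det := by
      conv_lhs => rw [← Matrix.updateCol_eq_self M L, hcol]
      rw [Matrix.det_updateCol_add, Matrix.det_updateCol_smul]
    set M₁ := M.updateCol L (fun j => if j = L then (1:F) else 0) with hM₁
    set M₂ := M.updateCol L (fun j => a j L) with hM₂
    -- entries of M off the last column
    have hMoff : ∀ (p : Fin (m+1)) (q : Fin (m+1)), q ≠ L →
        M p q = (if p = q then (1:F) else 0) - a p q * η q := by
      intro p q hq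
      simp [hM, Matrix.sub_apply, Matrix.one_apply, Matrix.mul_diagonal]
    -- M₁'s determinant is the determinant of the principal submatrix
    have hsub : M₁.submatrix Fin.castSucc Fin.castSucc
        = 1 - (a.submatrix Fin.castSucc Fin.castSucc) *
            Matrix.diagonal (fun j : Fin m => η j.castSucc) := by
      ext p q
      have hq : (q.castSucc : Fin (m+1)) ≠ L := (Fin.castSucc_lt_last q).ne
      simp only [Matrix.submatrix_apply, hM₁, Matrix.updateCol_apply, if_neg hq]
      rw [hMoff _ _ hq]
      simp [Matrix.sub_apply, Matrix.one_apply, Matrix.mul_diagonal,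
        Fin.castSucc_inj]
    have hdet1 : M₁.det = (M₁.submatrix Fin.castSucc Fin.castSucc).det := by
      rw [Matrix.det_succ_column M₁ L]
      rw [Finset.sum_eq_single L]
      · have h1 : M₁ L L = 1 := by simp [hM₁, Matrix.updateCol_self]
        rw [h1, hL]
        simp [Fin.succAbove_last]
      · intro i _ hi
        have h0 : M₁ i L = 0 := by simp [hM₁, Matrix.updateCol_self, if_neg hi]
        rw [h0]; ring
      · intro habs; exact absurd (Finset.mem_univ L) habs
    -- inductive hypothesis
    have hIH : (M₁.submatrix Fin.castSucc Fin.castSucc).det ≠ 0 := by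
      rw [hsub]
      refine ih (fun j => K j.castSucc) (fun x y hxy => hmono (Fin.castSucc_le_castSucc_iff.mpr hxy))
        _ (fun i j => by simpa using ha i.castSucc j.castSucc) _
        (fun j => ?_) (fun j => ?_)
      · have := hη1 j.castSucc
        rwa [Fin.succ_castSucc] at this
      · exact hη2 j.castSucc
    -- membership of both determinants in S
    have hd1S : M₁.det ∈ S := by
      refine det_mem_subfield S M₁ fun p q => ?_
      by_cases hq : q = L
      · subst hq
        simp only [hM₁, Matrix.updateCol_self]
        split <;> simp [Subfield.one_mem, Subfield.zero_mem]
      · rw [hM₁, Matrix.updateCol_apply, if_neg hq, hMoff _ _ hq]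
        refine S.sub_mem ?_ (S.mul_mem (hK0S (ha p q)) (hKqS q hq (hη1 q)))
        split <;> simp [Subfield.one_mem, Subfield.zero_mem]
    have hd2S : M₂.det ∈ S := by
      refine det_mem_subfield S M₂ fun p q => ?_
      by_cases hq : q = L
      · subst hq
        simp only [hM₂, Matrix.updateCol_self]
        exact hK0S (ha p _)
      · rw [hM₂, Matrix.updateCol_apply, if_neg hq, hMoff _ _ hq]
        refine S.sub_mem ?_ (S.mul_mem (hK0S (ha p q)) (hKqS q hq (hη1 q)))
        split <;> simp [Subfield.one_mem, Subfield.zero_mem]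
    -- conclude
    intro h0
    rw [hdet] at h0
    have hd1 : M₁.det ≠ 0 := by rw [hdet1]; exact hIH
    by_cases h2 : M₂.det = 0
    · rw [h2, mul_zero, add_zero] at h0
      exact hd1 h0
    · have he : η L * M₂.det = M₁.det := by linear_combination -h0
      have hηL : η L = M₁.det * (M₂.det)⁻¹ := by
        rw [← he, mul_assoc, mul_inv_cancel₀ h2, mul_one]
      exact hη2 L (hηL ▸ S.mul_mem hd1S (S.inv_mem hd2S))

/-- The key lemma: a twisted polynomial vanishing at `k` distinct points of `K 0` is zero. -/
lemma twisted_key {F : Type*} [Field F] {k ℓ : ℕ} (hk : 0 < k)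
    (K : Fin (ℓ + 1) → Subfield F) (hmono : Monotone K)
    (t h : Fin ℓ → ℕ) (η : Fin ℓ → F)
    (ht1 : ∀ j, 1 ≤ t j) (htinj : Function.Injective t) (hh : ∀ j, h j < k)
    (hη1 : ∀ j : Fin ℓ, η j ∈ K j.succ) (hη2 : ∀ j : Fin ℓ, η j ∉ K j.castSucc)
    (g : Polynomial F) (hg : g ∈ twistedSet k ℓ t h η)
    (S : Finset F) (hSK : ↑S ⊆ (K 0 : Set F)) (hScard : S.card = k)
    (hroots : ∀ x ∈ S, g.eval x = 0) : g = 0 := by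
  obtain ⟨f, hgf⟩ := hg
  set c : Fin ℓ → F := fun j => f (h j) with hc
  -- exponents of the twist terms are ≥ k
  have hexp : ∀ j : Fin ℓ, k ≤ k - 1 + t j := fun j => by have := ht1 j; omega
  -- coefficients of g
  have hcoeff : ∀ m : ℕ, g.coeff m =
      (if m < k then f m else 0) + ∑ j : Fin ℓ, (if k - 1 + t j = m then η j * c j else 0) := by
    intro m
    rw [hgf]
    simp only [Polynomial.coeff_add, Polynomial.finset_sum_coeff,
      Polynomial.C_mul_X_pow_eq_monomial, Polynomial.coeff_monomial]
    congr 1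
    by_cases hm : m < k
    · rw [if_pos hm, Finset.sum_ite_eq']
      simp [hm]
    · rw [if_neg hm]
      apply Finset.sum_eq_zero
      intro i hi
      rw [if_neg]
      intro hcon
      exact hm (hcon ▸ Finset.mem_range.mp hi)
  -- the vanishing polynomial of the root set
  set R : Polynomial F := ∏ x ∈ S, (X - Polynomial.C x) with hR
  have hRmonic : R.Monic := Polynomial.monic_prod_of_monic _ _ fun x _ => Polynomial.monic_X_sub_C x
  have hRdeg : R.natDegree = k := by
    rw [hR, Polynomial.natDegree_prod _ _ fun x _ => Polynomial.X_sub_C_ne_zero x]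
    simp [Polynomial.natDegree_X_sub_C, hScard]
  have hRdvd : R ∣ g := by
    refine Finset.prod_dvd_of_coprime
      ((Polynomial.pairwise_coprime_X_sub_C Function.injective_id).set_pairwise _) fun x hx => ?_
    exact Polynomial.dvd_iff_isRoot.mpr (hroots x hx)
  have hRK : ∀ m, R.coeff m ∈ K 0 := by
    have := Finset.prod_induction (fun x : F => X - Polynomial.C x)
      (fun p : Polynomial F => ∀ m, p.coeff m ∈ K 0)
      (fun p q hp hq m => by
        rw [Polynomial.coeff_mul]
        exact Subfield.sum_mem _ fun y _ => Subfield.mul_mem _ (hp y.1) (hq y.2))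
      (fun m => by
        rw [Polynomial.coeff_one]
        split <;> simp [Subfield.one_mem, Subfield.zero_mem])
      (fun x hx m => by
        rw [Polynomial.coeff_sub]
        match m with
        | 0 => simpa using Subfield.neg_mem _ (hSK hx)
        | 1 => simpa using Subfield.one_mem (K 0)
        | (mm+2) => simp [Polynomial.coeff_X, Polynomial.coeff_C, Subfield.zero_mem])
    exact this
  obtain ⟨Q, hQ⟩ := hRdvd
  -- the span of the twist coefficients over K 0
  set W : Submodule (K 0) F := Submodule.span (K 0) (Set.range fun j => η j * c j) with hW
  have hsmulW : ∀ x y : F, x ∈ K 0 → y ∈ W → x * y ∈ W := by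
    intro x y hx hy
    have := W.smul_mem ⟨x, hx⟩ hy
    rwa [Subring.smul_def] at this
  -- high coefficients of g lie in W
  have hgW : ∀ m, k ≤ m → g.coeff m ∈ W := by
    intro m hm
    rw [hcoeff m, if_neg (by omega), zero_add]
    refine Submodule.sum_mem _ fun j _ => ?_
    split
    · exact Submodule.subset_span ⟨j, rfl⟩
    · exact W.zero_mem
  -- coefficients of Q lie in W, by downward induction
  have hQW : ∀ d, Q.coeff d ∈ W := by
    suffices H : ∀ m d, Q.natDegree - d < m → Q.coeff d ∈ W by
      intro d; exact H (Q.natDegree - d + 1) d (by omega)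
    intro m
    induction m with
    | zero => intro d hd; omega
    | succ m ih =>
      intro d hd
      by_cases hdD : Q.natDegree < d
      · rw [Polynomial.coeff_eq_zero_of_natDegree_lt hdD]; exact W.zero_mem
      · push_neg at hdD
        have hmem : ((k, d) : ℕ × ℕ) ∈ Finset.HasAntidiagonal.antidiagonal (k + d) := by
          simp
        have hgc : g.coeff (k + d) = R.coeff k * Q.coeff d
            + ∑ y ∈ (Finset.HasAntidiagonal.antidiagonal (k + d)).erase (k, d), R.coeff y.1 * Q.coeff y.2 := by
          rw [hQ, Polynomial.coeff_mul, ← Finset.add_sum_erase _ _ hmem]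
        have hRk : R.coeff k = 1 := by
          have := hRmonic.coeff_natDegree
          rwa [hRdeg] at this
        have hQd : Q.coeff d = g.coeff (k + d)
            - ∑ y ∈ (Finset.HasAntidiagonal.antidiagonal (k + d)).erase (k, d), R.coeff y.1 * Q.coeff y.2 := by
          rw [hgc, hRk, one_mul]; ring
        rw [hQd]
        refine W.sub_mem (hgW _ (by omega)) (Submodule.sum_mem _ fun y hy => ?_)
        obtain ⟨hyne, hysum⟩ := Finset.mem_erase.mp hy
        rw [Finset.HasAntidiagonal.mem_antidiagonal] at hysum
        rcases lt_trichotomy y.2 d with hlt | heq | hgt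
        · -- y.1 > k, so R.coeff y.1 = 0
          have : R.natDegree < y.1 := by omega
          rw [Polynomial.coeff_eq_zero_of_natDegree_lt this, zero_mul]
          exact W.zero_mem
        · exfalso; apply hyne
          have : y.1 = k := by omega
          exact Prod.ext this heq
        · by_cases hyD : Q.natDegree < y.2
          · rw [Polynomial.coeff_eq_zero_of_natDegree_lt hyD, mul_zero]
            exact W.zero_mem
          · exact hsmulW _ _ (hRK y.1) (ih y.2 (by omega))
  -- the twist coefficients lie in W
  have hcW : ∀ j : Fin ℓ, c j ∈ W := by
    intro j
    have h1 : c j = g.coeff (h j) := by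
      rw [hcoeff (h j), if_pos (hh j)]
      have : ∀ j' : Fin ℓ, (if k - 1 + t j' = h j then η j' * c j' else 0) = 0 := by
        intro j'
        rw [if_neg]
        have := hexp j'; have := hh j
        omega
      rw [Finset.sum_congr rfl fun j' _ => this j', Finset.sum_const_zero, add_zero, hc]
    rw [h1, hQ, Polynomial.coeff_mul]
    exact Submodule.sum_mem _ fun y _ => hsmulW _ _ (hRK y.1) (hQW y.2)
  -- extract the matrix of the linear system
  have hex : ∀ j : Fin ℓ, ∃ b : Fin ℓ → (K 0), (∑ i, b i • (η i * c i)) = c j := by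
    intro j
    exact (Submodule.mem_span_range_iff_exists_fun _).mp (hcW j)
  choose b hb using hex
  set A : Matrix (Fin ℓ) (Fin ℓ) F := fun j i => (b j i : F) with hA
  have hmul : (1 - A * Matrix.diagonal η).mulVec c = 0 := by
    funext j
    have h1 : ((1 - A * Matrix.diagonal η).mulVec c) j
        = c j - ∑ i, A j i * η i * c i := by
      rw [Matrix.sub_mulVec, Matrix.one_mulVec]
      simp only [Pi.sub_apply, Matrix.mulVec, dotProduct, Matrix.mul_diagonal]
    rw [h1]
    have h2 : ∑ i, A j i * η i * c i = c j := by
      rw [← hb j]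
      refine Finset.sum_congr rfl fun i _ => ?_
      simp only [hA, mul_assoc]
      exact (Subring.smul_def (b j i) (η i * c i)).symm
    rw [h2, sub_self, Pi.zero_apply]
  have hdet : (1 - A * Matrix.diagonal η).det ≠ 0 :=
    det_one_sub_ne_zero ℓ K hmono A (fun i j => (b i j).2) η hη1 hη2
  have hc0 : c = 0 := Matrix.eq_zero_of_mulVec_eq_zero hdet hmul
  -- now g has degree < k, so it is zero
  have hglow : g = ∑ i ∈ Finset.range k, Polynomial.C (f i) * X ^ i := by
    rw [hgf]
    have : ∀ j : Fin ℓ, Polynomial.C (η j * f (h j)) * X ^ (k - 1 + t j) = 0 := by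
      intro j
      have : f (h j) = 0 := by
        have := congrFun hc0 j
        simpa [hc] using this
      simp [this]
    rw [Finset.sum_congr rfl fun j _ => this j, Finset.sum_const_zero, add_zero]
  by_contra hne
  have hdegle : g.natDegree ≤ k - 1 := by
    rw [hglow]
    refine Polynomial.natDegree_sum_le_of_forall_le _ _ fun i hi => ?_
    exact le_trans (Polynomial.natDegree_C_mul_X_pow_le _ _) (by
      have := Finset.mem_range.mp hi; omega)
  have := Polynomial.natDegree_le_of_dvd ⟨Q, hQ⟩ hne
  rw [hRdeg] at this
  omega

lemma twisted_T {F : Type*} [Field F] (k ℓ : ℕ) (hk : 0 < k) (t h : Fin ℓ → ℕ)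
    (η : Fin ℓ → F) (ht1 : ∀ j, 1 ≤ t j) (hh : ∀ j, h j < k) :
    ∃ T : (Fin k → F) →ₗ[F] Polynomial F, Set.range ⇑T = twistedSet k ℓ t h η ∧
      ∀ (f : Fin k → F) (i : Fin k), (T f).coeff i = f i := by
  set T : (Fin k → F) →ₗ[F] Polynomial F :=
    (∑ i : Fin k, LinearMap.smulRight (LinearMap.proj i) (X ^ (i : ℕ)))
      + ∑ j : Fin ℓ, LinearMap.smulRight (η j • LinearMap.proj (⟨h j, hh j⟩ : Fin k))
          (X ^ (k - 1 + t j)) with hT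
  have hTf : ∀ f : Fin k → F, T f = (∑ i : Fin k, Polynomial.C (f i) * X ^ (i : ℕ))
      + ∑ j : Fin ℓ, Polynomial.C (η j * f ⟨h j, hh j⟩) * X ^ (k - 1 + t j) := by
    intro f
    simp [hT, LinearMap.sum_apply, LinearMap.smulRight_apply, LinearMap.proj_apply,
      LinearMap.smul_apply, smul_eq_mul, Polynomial.smul_eq_C_mul]
  refine ⟨T, ?_, ?_⟩
  · ext g
    constructor
    · rintro ⟨f', rfl⟩
      refine ⟨fun m => if hm : m < k then f' ⟨m, hm⟩ else 0, ?_⟩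
      rw [hTf]
      congr 1
      · rw [Finset.sum_range]
        exact Finset.sum_congr rfl fun i _ => by simp [i.isLt]
      · exact Finset.sum_congr rfl fun j _ => by simp [hh j]
    · rintro ⟨f, rfl⟩
      refine ⟨fun i => f i, ?_⟩
      rw [hTf, ← Finset.sum_range fun i => Polynomial.C (f i) * X ^ i]
  · intro f i
    rw [hTf]
    simp only [Polynomial.coeff_add, Polynomial.finset_sum_coeff,
      Polynomial.C_mul_X_pow_eq_monomial, Polynomial.coeff_monomial]
    have h2 : ∀ j : Fin ℓ, (if k - 1 + t j = (i : ℕ) then η j * f ⟨h j, hh j⟩ else 0) = 0 := by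
      intro j
      rw [if_neg]
      have := ht1 j; have := i.isLt
      omega
    rw [Finset.sum_congr rfl fun j _ => h2 j, Finset.sum_const_zero, add_zero]
    have h3 : ∀ i' : Fin k, ((i' : ℕ) = (i : ℕ)) = (i' = i) := by
      intro i'; simp [Fin.val_inj]
    simp only [h3]
    rw [Finset.sum_ite_eq']
    simp

/-- If the evaluation points lie in the smallest field of a chain of subfields
`F_{s₀} ⊊ F_{s₁} ⊊ ⋯ ⊊ F_{s_ℓ} = F_q`, `n ≤ s₀`, and `ηᵢ ∈ F_{sᵢ} \ F_{s_{i-1}}`,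
then the twisted Reed–Solomon code is MDS: its minimum distance is `n - k + 1`. -/
theorem twistedCode_MDS {F : Type*} [Field F] [Fintype F] {n k ℓ : ℕ}
    (hk : 0 < k) (hkn : k < n)
    (K : Fin (ℓ + 1) → Subfield F)
    (hchain : ∀ i : Fin ℓ, K i.castSucc < K i.succ)
    (htop : K (Fin.last ℓ) = ⊤)
    (α : Fin n → F) (hα : Function.Injective α) (hαK : ∀ i, α i ∈ K 0)
    (hns : n ≤ Nat.card (K 0))
    (t h : Fin ℓ → ℕ) (η : Fin ℓ → F)
    (ht1 : ∀ j, 1 ≤ t j) (ht2 : ∀ j, t j ≤ n - k) (htinj : Function.Injective t)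
    (hh : ∀ j, h j < k) (hhinj : Function.Injective h)
    (hη : ∀ j : Fin ℓ, η j ∈ K j.succ ∧ η j ∉ K j.castSucc) :
    (∀ c ∈ twistedCode n k ℓ α t h η, c ≠ 0 → n - k + 1 ≤ wt c) ∧
      (∃ c ∈ twistedCode n k ℓ α t h η, c ≠ 0 ∧ wt c = n - k + 1) := by
  classical
  have hmono : Monotone K := (Fin.strictMono_iff_lt_succ.mpr hchain).monotone
  obtain ⟨T, hTr, hTc⟩ := twisted_T k ℓ hk t h η ht1 hh
  have hcode : twistedCode n k ℓ α t h η = LinearMap.range ((evalVec α).comp T) := by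
    rw [twistedCode, ← hTr, ← Set.range_comp, ← LinearMap.coe_comp, ← LinearMap.coe_range,
      Submodule.span_eq]
  have hkey : ∀ g ∈ twistedSet k ℓ t h η, ∀ Z : Finset (Fin n), k ≤ Z.card →
      (∀ i ∈ Z, Polynomial.eval (α i) g = 0) → g = 0 := by
    intro g hg Z hZ hzero
    obtain ⟨Z', hZ'sub, hZ'card⟩ := Finset.exists_subset_card_eq hZ
    refine twisted_key hk K hmono t h η ht1 htinj hh (fun j => (hη j).1) (fun j => (hη j).2)
      g hg (Z'.image α) ?_ ?_ ?_
    · intro x hx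
      simp only [Finset.coe_image, Set.mem_image] at hx
      obtain ⟨i, _, rfl⟩ := hx
      exact hαK i
    · rw [Finset.card_image_of_injective _ hα, hZ'card]
    · intro x hx
      rw [Finset.mem_image] at hx
      obtain ⟨i, hi, rfl⟩ := hx
      exact hzero i (hZ'sub hi)
  have hwt : ∀ c : Fin n → F, (Finset.univ.filter (fun i => c i = 0)).card + wt c = n := by
    intro c
    have h1 := Finset.card_filter_add_card_filter_not
      (s := (Finset.univ : Finset (Fin n))) (p := fun i => c i = 0)
    rw [Finset.card_univ, Fintype.card_fin] at h1
    unfold wt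
    rw [Nat.card_eq_fintype_card, Fintype.card_subtype]
    exact h1
  have heval : ∀ (p : Polynomial F) (i : Fin n), evalVec α p i = Polynomial.eval (α i) p := by
    intro p i
    simp [evalVec, Polynomial.leval_apply]
  constructor
  · intro c hc hc0
    rw [hcode] at hc
    obtain ⟨f', hf'⟩ := hc
    by_contra hlt
    push_neg at hlt
    set Z := Finset.univ.filter (fun i => c i = 0) with hZdef
    have hZcard : k ≤ Z.card := by
      have hwtc := hwt c
      rw [← hZdef] at hwtc
      omega
    have hg0 : T f' = 0 := by
      refine hkey (T f') (hTr ▸ Set.mem_range_self f') Z hZcard fun i hi => ?_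
      have hci : c i = 0 := (Finset.mem_filter.mp hi).2
      rw [← heval, ← LinearMap.comp_apply, hf']
      exact hci
    apply hc0
    rw [← hf', LinearMap.comp_apply, hg0, map_zero]
  · set emb : Fin (k - 1) → Fin n := fun i => ⟨i, by have := i.isLt; omega⟩ with hemb
    have hembinj : Function.Injective emb := by
      intro x y hxy
      simpa [hemb, Fin.ext_iff] using hxy
    set E := (LinearMap.funLeft F F emb).comp ((evalVec α).comp T) with hE
    have hnotinj : ¬ Function.Injective E := by
      intro hinj
      have hle := LinearMap.finrank_le_finrank_of_injective hinj
      rw [Module.finrank_pi, Module.finrank_pi, Fintype.card_fin, Fintype.card_fin] at hle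
      omega
    rw [Function.not_injective_iff] at hnotinj
    obtain ⟨f₁, f₂, hEf, hfne⟩ := hnotinj
    set f' := f₁ - f₂ with hf'
    have hf'ne : f' ≠ 0 := sub_ne_zero.mpr hfne
    have hEf' : E f' = 0 := by rw [hf', map_sub, hEf, sub_self]
    set g := T f' with hg
    have hgne : g ≠ 0 := by
      intro h0
      obtain ⟨i, hi⟩ := Function.ne_iff.mp hf'ne
      apply hi
      have hco := hTc f' i
      rw [← hg, h0] at hco
      simpa using hco.symm
    set c := evalVec α g with hcdef
    have hcmem : c ∈ twistedCode n k ℓ α t h η := by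
      rw [hcode]
      exact ⟨f', rfl⟩
    set Z := Finset.univ.filter (fun i => c i = 0) with hZdef
    have hZge : k - 1 ≤ Z.card := by
      have hsub : Finset.univ.image emb ⊆ Z := by
        intro x hx
        rw [Finset.mem_image] at hx
        obtain ⟨i, _, rfl⟩ := hx
        rw [hZdef, Finset.mem_filter]
        refine ⟨Finset.mem_univ _, ?_⟩
        have h4 := congrFun hEf' i
        simpa [hE, LinearMap.comp_apply, LinearMap.funLeft_apply, hcdef, hg] using h4
      calc k - 1 = (Finset.univ.image emb).card := by
            rw [Finset.card_image_of_injective _ hembinj, Finset.card_univ, Fintype.card_fin]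
        _ ≤ Z.card := Finset.card_le_card hsub
    have hZle : Z.card ≤ k - 1 := by
      by_contra hgt
      push_neg at hgt
      refine hgne (hkey g (hTr ▸ Set.mem_range_self f') Z (by omega) fun i hi => ?_)
      rw [← heval]
      exact (Finset.mem_filter.mp hi).2
    have hZcard : Z.card = k - 1 := le_antisymm hZle hZge
    have hwtc := hwt c
    rw [← hZdef] at hwtc
    refine ⟨c, hcmem, ?_, by omega⟩
    intro hc0
    have hZuniv : Z = Finset.univ := by
      rw [hZdef]
      rw [Finset.filter_true_of_mem]
      intro i _
      rw [hc0]
      rfl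
    rw [hZuniv, Finset.card_univ, Fintype.card_fin] at hZcard
    omega
end

section
/- If C ⊆ F_qⁿ is a linear MDS code of dimension k, then dim(C²) ≥ min{2k − 1, n}. -/
open Polynomial

/-- The Schur product code: span of all componentwise products of codewords. -/
def schurCode {F : Type*} [Field F] {n : ℕ} (C₁ C₂ : Submodule F (Fin n → F)) :
    Submodule F (Fin n → F) :=
  Submodule.span F { z | ∃ c₁ ∈ C₁, ∃ c₂ ∈ C₂, z = fun i => c₁ i * c₂ i }

private lemma wt_eq_card {F : Type*} [Zero F] {n : ℕ} (x : Fin n → F)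
    [DecidablePred fun l => x l ≠ 0] :
    wt x = (Finset.univ.filter fun l => x l ≠ 0).card := by
  rw [wt, Nat.card_eq_fintype_card, Fintype.card_subtype]

/-- For an MDS code and any information set `S` (of size `k`) containing `i`,
there is a codeword that is the indicator of `i` on `S` and nonvanishing off `S`. -/
private lemma exists_unit_codeword {F : Type*} [Field F] {n k : ℕ}
    (C : Submodule F (Fin n → F)) (hdim : Module.finrank F C = k)
    (hd : ∀ c ∈ C, c ≠ 0 → n - k + 1 ≤ wt c)
    (S : Finset (Fin n)) (hS : S.card = k) {i : Fin n} (hi : i ∈ S) :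
    ∃ c, c ∈ C ∧ c i = 1 ∧ (∀ l ∈ S, l ≠ i → c l = 0) ∧ ∀ l, l ∉ S → c l ≠ 0 := by
  classical
  have hkn : k ≤ n := by
    calc k = S.card := hS.symm
    _ ≤ Fintype.card (Fin n) := Finset.card_le_univ S
    _ = n := Fintype.card_fin n
  have hk1 : 1 ≤ k := hS ▸ Finset.card_pos.mpr ⟨i, hi⟩
  set π : C →ₗ[F] (↥S → F) :=
    (LinearMap.funLeft F F (Subtype.val : ↥S → Fin n)).comp C.subtype with hπ
  have hinj : Function.Injective π := by
    rw [← LinearMap.ker_eq_bot, Submodule.eq_bot_iff]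
    intro c hc
    rw [LinearMap.mem_ker] at hc
    by_contra hne
    have hcne : (c : Fin n → F) ≠ 0 := fun h => hne (Subtype.ext h)
    have hwt := hd c c.2 hcne
    rw [wt_eq_card] at hwt
    have hsub : (Finset.univ.filter fun l => (c : Fin n → F) l ≠ 0) ⊆ Sᶜ := by
      intro l hl
      simp only [Finset.mem_filter] at hl
      rw [Finset.mem_compl]
      intro hlS
      exact hl.2 (by have := congrFun hc ⟨l, hlS⟩; simpa [hπ] using this)
    have hcard := Finset.card_le_card hsub
    rw [Finset.card_compl, Fintype.card_fin, hS] at hcard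
    omega
  have hsurj : Function.Surjective π := by
    have h1 : Module.finrank F (LinearMap.range π) = Module.finrank F (↥S → F) := by
      rw [LinearMap.finrank_range_of_inj hinj, hdim, Module.finrank_pi, Fintype.card_coe, hS]
    rw [← LinearMap.range_eq_top]
    exact Submodule.eq_top_of_finrank_eq h1
  obtain ⟨c, hc⟩ := hsurj (fun s => if (s : Fin n) = i then 1 else 0)
  have hcS : ∀ l, l ∈ S → (c : Fin n → F) l = if l = i then 1 else 0 := by
    intro l hl
    have := congrFun hc ⟨l, hl⟩
    simpa [hπ] using this
  have hci : (c : Fin n → F) i = 1 := by rw [hcS i hi]; simp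
  have hcne : (c : Fin n → F) ≠ 0 := by
    intro h
    rw [h] at hci
    exact one_ne_zero hci.symm
  have hwt := hd c c.2 hcne
  rw [wt_eq_card] at hwt
  have hsub : (Finset.univ.filter fun l => (c : Fin n → F) l ≠ 0) ⊆ (S.erase i)ᶜ := by
    intro l hl
    simp only [Finset.mem_filter] at hl
    rw [Finset.mem_compl, Finset.mem_erase]
    rintro ⟨hli, hlS⟩
    exact hl.2 (by rw [hcS l hlS, if_neg hli])
  have hcc : ((S.erase i)ᶜ).card = n - k + 1 := by
    rw [Finset.card_compl, Finset.card_erase_of_mem hi, Fintype.card_fin, hS]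
    omega
  have heq := Finset.eq_of_subset_of_card_le hsub (by rw [hcc]; exact hwt)
  have hfull : ∀ l, l ∉ S → (c : Fin n → F) l ≠ 0 := by
    intro l hlS
    have hl : l ∈ (S.erase i)ᶜ :=
      Finset.mem_compl.mpr (fun h => hlS (Finset.mem_of_mem_erase h))
    rw [← heq] at hl
    exact (Finset.mem_filter.mp hl).2
  exact ⟨c, c.2, hci, fun l hl hne => by rw [hcS l hl, if_neg hne], hfull⟩

/-- If `C ⊆ F_qⁿ` is a linear MDS code of dimension `k`, then
`dim(C²) ≥ min{2k - 1, n}`. -/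
theorem schurSquare_dim_lower_bound_of_MDS {F : Type*} [Field F] [Fintype F]
    {n k : ℕ} (C : Submodule F (Fin n → F))
    (hdim : Module.finrank F C = k)
    (hMDS : (∀ c ∈ C, c ≠ 0 → n - k + 1 ≤ wt c) ∧
      ∃ c ∈ C, c ≠ 0 ∧ wt c = n - k + 1) :
    min (2 * k - 1) n ≤ Module.finrank F (schurCode C C) := by
  classical
  obtain ⟨hd, -⟩ := hMDS
  rcases Nat.eq_zero_or_pos k with hk0 | hk1
  · subst hk0; simp
  have hkn : k ≤ n := by
    have h := Submodule.finrank_le C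
    rwa [hdim, Module.finrank_fin_fun] at h
  set m := min (2 * k - 1) n with hm
  have hmn : m ≤ n := min_le_right _ _
  have hkm : k ≤ m := by omega
  have hm2k : m ≤ 2 * k - 1 := min_le_left _ _
  -- the two information sets
  set S : Finset (Fin n) := Finset.univ.filter (fun l => l.val < k) with hSdef
  have hSmem : ∀ l : Fin n, l ∈ S ↔ l.val < k := by
    intro l; simp [hSdef]
  have hScard : S.card = k := by
    apply Finset.card_eq_of_bijective (fun j hj => (⟨j, lt_of_lt_of_le hj hkn⟩ : Fin n))
    · intro a ha
      exact ⟨a.val, (hSmem a).mp ha, rfl⟩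
    · intro j hj
      exact (hSmem _).mpr hj
    · intro j j' hj hj' h
      exact congrArg Fin.val h
  set T : Finset (Fin n) := Finset.univ.filter (fun l => m - k ≤ l.val ∧ l.val < m) with hTdef
  have hTmem : ∀ l : Fin n, l ∈ T ↔ m - k ≤ l.val ∧ l.val < m := by
    intro l; simp [hTdef]
  have hTcard : T.card = k := by
    apply Finset.card_eq_of_bijective (fun j hj => (⟨m - k + j, by omega⟩ : Fin n))
    · intro a ha
      have := (hTmem a).mp ha
      exact ⟨a.val - (m - k), by omega, by apply Fin.ext; simp; omega⟩
    · intro j hj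
      apply (hTmem _).mpr
      simp
      omega
    · intro j j' hj hj' h
      have := congrArg Fin.val h
      simp at this
      omega
  -- key construction
  have key : ∀ i : Fin n, i.val < m → ∃ z ∈ schurCode C C,
      z i ≠ 0 ∧ ∀ l : Fin n, l.val < m → l ≠ i → z l = 0 := by
    intro i him
    have hin : i.val < n := i.isLt
    have ha : min i.val (k - 1) < n := by omega
    have hb : max i.val (m - k) < n := by omega
    set a : Fin n := ⟨min i.val (k - 1), ha⟩ with hadef
    set b : Fin n := ⟨max i.val (m - k), hb⟩ with hbdef
    have haS : a ∈ S := (hSmem a).mpr (by simp [hadef]; omega)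
    have hbT : b ∈ T := (hTmem b).mpr (by simp [hbdef]; omega)
    obtain ⟨x, hxC, hxa, hxS, hxsupp⟩ := exists_unit_codeword C hdim hd S hScard haS
    obtain ⟨y, hyC, hyb, hyT, hysupp⟩ := exists_unit_codeword C hdim hd T hTcard hbT
    refine ⟨fun l => x l * y l, Submodule.subset_span ⟨x, hxC, y, hyC, rfl⟩, ?_, ?_⟩
    · apply mul_ne_zero
      · by_cases h : i.val < k
        · have hai : a = i := Fin.ext (by simp [hadef]; omega)
          rw [← hai, hxa]; exact one_ne_zero
        · exact hxsupp i (fun hiS => h ((hSmem i).mp hiS))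
      · by_cases h : m - k ≤ i.val
        · have hbi : b = i := Fin.ext (by simp [hbdef]; omega)
          rw [← hbi, hyb]; exact one_ne_zero
        · refine hysupp i (fun hiT => h ((hTmem i).mp hiT).1)
    · intro l hlm hli
      by_cases hlk : l.val < k
      · by_cases hla : l = a
        · -- then i.val ≥ k (else a = i = l), and y l = 0 since l ∈ T, l ≠ b
          have hik : k ≤ i.val := by
            by_contra h
            push_neg at h
            have hai : a = i := Fin.ext (by simp [hadef]; omega)
            exact hli (hla.trans hai)
          have hlval : l.val = k - 1 := by
            have := congrArg Fin.val hla
            simp [hadef] at this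
            omega
          have hlT : l ∈ T := (hTmem l).mpr (by omega)
          have hlb : l ≠ b := by
            intro h
            have := congrArg Fin.val h
            simp [hbdef] at this
            omega
          show x l * y l = 0
          rw [hyT l hlT hlb, mul_zero]
        · show x l * y l = 0
          rw [hxS l ((hSmem l).mpr hlk) hla, zero_mul]
      · have hlT : l ∈ T := (hTmem l).mpr ⟨by omega, hlm⟩
        have hlb : l ≠ b := by
          intro h
          have hv := congrArg Fin.val h
          simp [hbdef] at hv
          rcases Nat.lt_or_ge i.val (m - k) with h' | h'
          · omega
          · have : b = i := Fin.ext (by simp [hbdef]; omega)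
            exact hli (h.trans this)
        show x l * y l = 0
        rw [hyT l hlT hlb, mul_zero]
  -- build the linearly independent family
  have he : ∀ j : Fin m, (j : ℕ) < n := fun j => lt_of_lt_of_le j.isLt hmn
  set e : Fin m → Fin n := fun j => ⟨j, he j⟩ with hedef
  have keyv : ∀ j : Fin m, ∃ z, z ∈ schurCode C C ∧
      z (e j) ≠ 0 ∧ ∀ l : Fin n, l.val < m → l ≠ e j → z l = 0 := by
    intro j
    obtain ⟨z, hz1, hz2, hz3⟩ := key (e j) j.isLt
    exact ⟨z, hz1, hz2, hz3⟩
  choose z hz1 hz2 hz3 using keyv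
  have hind : LinearIndependent F z := by
    rw [Fintype.linearIndependent_iff]
    intro g hg j
    have hgj := congrFun hg (e j)
    rw [Finset.sum_apply] at hgj
    have hsingle : ∀ j' ∈ Finset.univ, j' ≠ j → (g j' • z j') (e j) = 0 := by
      intro j' _ hne
      have hne' : e j ≠ e j' := by
        intro h
        have hv : (j : ℕ) = (j' : ℕ) := congrArg (Fin.val : Fin n → ℕ) h
        exact hne (Fin.ext hv.symm)
      rw [Pi.smul_apply, hz3 j' (e j) j.isLt hne', smul_zero]
    rw [Finset.sum_eq_single j hsingle (by simp)] at hgj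
    rw [Pi.smul_apply, smul_eq_mul] at hgj
    simpa using (mul_eq_zero.mp hgj).resolve_right (hz2 j)
  set w : Fin m → ↥(schurCode C C) := fun j => ⟨z j, hz1 j⟩ with hwdef
  have hindw : LinearIndependent F w := by
    have hcomp : z = (schurCode C C).subtype ∘ w := rfl
    rw [hcomp] at hind
    exact LinearIndependent.of_comp _ hind
  have hcard := hindw.fintype_card_le_finrank
  simpa using hcard
end

section
/- Let C = C^{n,k}(α,t,h,η) be a twisted RS code and D = { deg(f·g) : f, g ∈ P }. Then dim(C²) ≥ |{ d ∈ D : d < n }|. -/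
open Polynomial

lemma linearIndependent_of_natDegree_injective {F : Type*} [Field F] {ι : Type*}
    (p : ι → F[X]) (h0 : ∀ i, p i ≠ 0)
    (hinj : Function.Injective fun i => (p i).natDegree) :
    LinearIndependent F p := by
  classical
  rw [linearIndependent_iff']
  intro s g hsum i hi
  by_contra hgi
  set T := s.filter (fun j => g j ≠ 0) with hT
  have hTne : T.Nonempty := ⟨i, Finset.mem_filter.2 ⟨hi, hgi⟩⟩
  obtain ⟨i₀, hi₀T, hmax⟩ := T.exists_max_image (fun j => (p j).natDegree) hTne
  have hgi₀ : g i₀ ≠ 0 := (Finset.mem_filter.1 hi₀T).2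
  have hcoeff := congrArg (fun q : F[X] => q.coeff (p i₀).natDegree) hsum
  simp only [Polynomial.finset_sum_coeff, Polynomial.coeff_smul, Polynomial.coeff_zero,
    smul_eq_mul] at hcoeff
  rw [Finset.sum_eq_single i₀] at hcoeff
  · exact hgi₀ (by
      have hlc : (p i₀).coeff (p i₀).natDegree ≠ 0 :=
        Polynomial.leadingCoeff_ne_zero.2 (h0 i₀)
      exact (mul_eq_zero.1 hcoeff).resolve_right hlc)
  · intro j hjs hji₀
    by_cases hgj : g j = 0
    · simp [hgj]
    · have hjT : j ∈ T := Finset.mem_filter.2 ⟨hjs, hgj⟩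
      have hle : (p j).natDegree ≤ (p i₀).natDegree := hmax j hjT
      have hne : (p j).natDegree ≠ (p i₀).natDegree := fun hE => hji₀ (hinj hE)
      rw [Polynomial.coeff_eq_zero_of_natDegree_lt (lt_of_le_of_ne hle hne), mul_zero]
  · intro hi₀s
    exact absurd (Finset.mem_filter.1 hi₀T).1 hi₀s

lemma linearIndependent_evalVec {F : Type*} [Field F] {n : ℕ} (α : Fin n → F)
    (hα : Function.Injective α) {ι : Type*} (p : ι → F[X])
    (h0 : ∀ i, p i ≠ 0) (hdeg : ∀ i, (p i).natDegree < n)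
    (hinj : Function.Injective fun i => (p i).natDegree) :
    LinearIndependent F fun i => evalVec α (p i) := by
  have hli := linearIndependent_of_natDegree_injective p h0 hinj
  have hmap := hli.map (f := evalVec (F := F) α) ?_
  · exact hmap
  · rw [Submodule.disjoint_def]
    intro x hx hker
    have hxdeg : x ∈ Polynomial.degreeLT F n := by
      refine Submodule.span_le.2 ?_ hx
      rintro _ ⟨i, rfl⟩
      rw [SetLike.mem_coe, Polynomial.mem_degreeLT]
      exact (Polynomial.natDegree_lt_iff_degree_lt (h0 i)).1 (hdeg i)
    have heval : ∀ i : Fin n, x.eval (α i) = 0 := by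
      intro i
      have := congrFun (LinearMap.mem_ker.1 hker) i
      simpa [evalVec] using this
    by_cases hx0 : x = 0
    · exact hx0
    · have hxlt : x.natDegree < n :=
        (Polynomial.natDegree_lt_iff_degree_lt hx0).2 (Polynomial.mem_degreeLT.1 hxdeg)
      exact Polynomial.eq_zero_of_natDegree_lt_card_of_eval_eq_zero x hα heval
        (by simpa using hxlt)

/-- Schur-square dimension lower bound: `dim(C²) ≥ |{d ∈ D : d < n}|`, where `D`
is the set of degrees of products of two twisted polynomials. -/
theorem schurSquare_twistedCode_lower_bound {F : Type*} [Field F] [Fintype F]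
    {n k ℓ : ℕ} (hk : 0 < k) (hkn : k < n)
    (α : Fin n → F) (hα : Function.Injective α)
    (t h : Fin ℓ → ℕ) (η : Fin ℓ → F)
    (ht1 : ∀ j, 1 ≤ t j) (ht2 : ∀ j, t j ≤ n - k) (htinj : Function.Injective t)
    (hh : ∀ j, h j < k) (hhinj : Function.Injective h)
    (hη : ∀ j, η j ≠ 0) :
    ({ d : ℕ | d < n ∧ ∃ f ∈ twistedSet k ℓ t h η, ∃ g ∈ twistedSet k ℓ t h η,
        f * g ≠ 0 ∧ (f * g).natDegree = d }).ncard
      ≤ Module.finrank F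
          (schurCode (twistedCode n k ℓ α t h η) (twistedCode n k ℓ α t h η)) := by
  classical
  set S : Set ℕ := { d : ℕ | d < n ∧ ∃ f ∈ twistedSet k ℓ t h η, ∃ g ∈ twistedSet k ℓ t h η,
        f * g ≠ 0 ∧ (f * g).natDegree = d } with hSdef
  have hSfin : S.Finite := (Set.finite_Iio n).subset fun d hd => hd.1
  haveI : Fintype S := hSfin.fintype
  set C := twistedCode n k ℓ α t h η with hC
  have H : ∀ d : S, ∃ q : F[X], q ≠ 0 ∧ q.natDegree = (d : ℕ) ∧
      evalVec α q ∈ schurCode C C := by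
    rintro ⟨d, hdlt, f, hf, g, hg, hne, hdeg⟩
    refine ⟨f * g, hne, hdeg, ?_⟩
    apply Submodule.subset_span
    refine ⟨evalVec α f, ?_, evalVec α g, ?_, ?_⟩
    · exact Submodule.subset_span ⟨f, hf, rfl⟩
    · exact Submodule.subset_span ⟨g, hg, rfl⟩
    · funext i
      simp [evalVec]
  choose p hp0 hpdeg hpmem using H
  have hpinj : Function.Injective fun d : S => (p d).natDegree := by
    intro d₁ d₂ hE
    apply Subtype.ext
    rw [← hpdeg d₁, ← hpdeg d₂]
    exact hE
  have hli : LinearIndependent F fun d : S => evalVec α (p d) :=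
    linearIndependent_evalVec α hα p hp0
      (fun d => by rw [hpdeg d]; exact d.2.1) hpinj
  have hspan : Submodule.span F (Set.range fun d : S => evalVec α (p d))
      ≤ schurCode C C := by
    rw [Submodule.span_le]
    rintro _ ⟨d, rfl⟩
    exact hpmem d
  calc S.ncard = Fintype.card S := by
        rw [Set.ncard_eq_toFinset_card' S, Set.toFinset_card]
    _ = Module.finrank F (Submodule.span F (Set.range fun d : S => evalVec α (p d))) :=
        (finrank_span_eq_card hli).symm
    _ ≤ Module.finrank F (schurCode C C) := Submodule.finrank_mono hspan
end

section
/- Let C be an [n,k] linear code with k < n/2 and dim(C²) = 2k − 1 + δ with δ > 0. If D is a GRS code with C ⊆ D, then dim(D) ≥ k + δ/2. -/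
open Polynomial

/-- `D` is a generalised Reed–Solomon code of dimension parameter `K`. -/
def IsGRS {F : Type*} [Field F] {n : ℕ} (D : Submodule F (Fin n → F)) (K : ℕ) : Prop :=
  ∃ (α v : Fin n → F), Function.Injective α ∧ (∀ i, v i ≠ 0) ∧
    (↑D : Set (Fin n → F)) =
      (fun f => fun i => v i * Polynomial.eval (α i) f) '' ↑(Polynomial.degreeLT F K)

/-- The evaluation map of a GRS code, as a linear map. -/
def evalMap {F : Type*} [Field F] {n : ℕ} (α v : Fin n → F) : F[X] →ₗ[F] (Fin n → F) where
  toFun f := fun i => v i * f.eval (α i)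
  map_add' f g := by funext i; simp [mul_add]
  map_smul' c f := by funext i; simp [smul_eq_mul]; ring

lemma finrank_degreeLT (F : Type*) [Field F] (m : ℕ) :
    Module.finrank F (Polynomial.degreeLT F m) = m := by
  rw [(Polynomial.degreeLTEquiv F m).finrank_eq, Module.finrank_fin_fun]

instance degreeLT_finite (F : Type*) [Field F] (m : ℕ) :
    Module.Finite F (Polynomial.degreeLT F m) :=
  Module.Finite.equiv (Polynomial.degreeLTEquiv F m).symm

/-- If `C` is an `[n,k]` code with `k < n/2` and `dim(C²) = 2k - 1 + δ`, `δ > 0`,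
then any GRS code `D ⊇ C` has `dim D ≥ k + δ/2`. -/
theorem dim_GRS_outer_lower_bound {F : Type*} [Field F] [Fintype F] {n k δ : ℕ}
    (C D : Submodule F (Fin n → F))
    (hk : Module.finrank F C = k) (hkn : 2 * k < n) (hδ : 0 < δ)
    (hC2 : Module.finrank F (schurCode C C) = 2 * k - 1 + δ)
    (hGRS : ∃ K : ℕ, IsGRS D K) (hCD : C ≤ D) :
    (k : ℚ) + (δ : ℚ) / 2 ≤ (Module.finrank F D : ℚ) := by
  obtain ⟨K, α, v, hα, hv, hD⟩ := hGRS
  -- D as the image of degreeLT K under the evaluation map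
  have hDmap : D = (Polynomial.degreeLT F K).map (evalMap α v) := by
    apply SetLike.ext'
    rw [Submodule.map_coe, hD]; rfl
  -- C² ≤ D²
  have hC2D2 : schurCode C C ≤ schurCode D D :=
    Submodule.span_mono (by
      rintro z ⟨c₁, hc₁, c₂, hc₂, rfl⟩
      exact ⟨c₁, hCD hc₁, c₂, hCD hc₂, rfl⟩)
  -- D² lies in the image of degreeLT (2K-1) under the squared-multiplier evaluation map
  have hsq : schurCode D D ≤
      (Polynomial.degreeLT F (2 * K - 1)).map (evalMap α (fun i => v i ^ 2)) := by
    apply Submodule.span_le.2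
    rintro z ⟨c₁, hc₁, c₂, hc₂, rfl⟩
    rw [hDmap] at hc₁ hc₂
    obtain ⟨f, hf, rfl⟩ := hc₁
    obtain ⟨g, hg, rfl⟩ := hc₂
    refine ⟨f * g, ?_, ?_⟩
    · rw [SetLike.mem_coe, Polynomial.mem_degreeLT]
      rw [SetLike.mem_coe] at hf hg
      rcases eq_or_ne (f * g) 0 with h0 | h0
      · rw [h0, Polynomial.degree_zero]
        exact WithBot.bot_lt_coe _
      · have hf0 : f ≠ 0 := fun h => h0 (by simp [h])
        have hg0 : g ≠ 0 := fun h => h0 (by simp [h])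
        rw [← Polynomial.natDegree_lt_iff_degree_lt h0, Polynomial.natDegree_mul hf0 hg0]
        have h1 : f.natDegree < K :=
          (Polynomial.natDegree_lt_iff_degree_lt hf0).2 (Polynomial.mem_degreeLT.1 hf)
        have h2 : g.natDegree < K :=
          (Polynomial.natDegree_lt_iff_degree_lt hg0).2 (Polynomial.mem_degreeLT.1 hg)
        omega
    · funext i
      show v i ^ 2 * (f * g).eval (α i) =
        (evalMap α v f) i * (evalMap α v g) i
      simp only [evalMap, LinearMap.coe_mk, AddHom.coe_mk, Polynomial.eval_mul]
      ring
  -- hence dim C² ≤ 2K - 1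
  have hbound : 2 * k - 1 + δ ≤ 2 * K - 1 := by
    rw [← hC2]
    calc Module.finrank F (schurCode C C)
        ≤ Module.finrank F
            ((Polynomial.degreeLT F (2 * K - 1)).map (evalMap α (fun i => v i ^ 2))) :=
          Submodule.finrank_mono (le_trans hC2D2 hsq)
      _ ≤ Module.finrank F (Polynomial.degreeLT F (2 * K - 1)) :=
          Submodule.finrank_map_le _ _
      _ = 2 * K - 1 := finrank_degreeLT F _
  rcases le_or_gt K n with hKn | hKn
  · -- K ≤ n : dim D = K
    have hinj : Function.Injective
        ((evalMap α v) ∘ₗ (Polynomial.degreeLT F K).subtype) := by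
      rw [← LinearMap.ker_eq_bot, eq_bot_iff]
      rintro ⟨f, hf⟩ hker
      have hev : ∀ i, f.eval (α i) = 0 := by
        intro i
        have : v i * f.eval (α i) = 0 := congrFun hker i
        exact (mul_eq_zero.1 this).resolve_left (hv i)
      have hf0 : f = 0 := by
        rcases eq_or_ne f 0 with h | h
        · exact h
        · refine Polynomial.eq_zero_of_natDegree_lt_card_of_eval_eq_zero f hα hev ?_
          have : f.natDegree < K := (Polynomial.natDegree_lt_iff_degree_lt h).2
            (Polynomial.mem_degreeLT.1 hf)
          simpa [Fintype.card_fin] using lt_of_lt_of_le this hKn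
      simp [hf0]
    have hrange : LinearMap.range ((evalMap α v) ∘ₗ (Polynomial.degreeLT F K).subtype) = D := by
      rw [LinearMap.range_comp, Submodule.range_subtype, ← hDmap]
    have hdim : Module.finrank F D = K := by
      rw [← hrange, LinearMap.finrank_range_of_inj hinj, finrank_degreeLT]
    rw [hdim]
    have h2 : 2 * k + δ ≤ 2 * K := by omega
    have h2' : (2 * k + δ : ℚ) ≤ 2 * K := by exact_mod_cast h2
    push_cast at h2'
    linarith
  · -- K > n : D = ⊤, so dim D = n
    have htop : D = ⊤ := by
      rw [hDmap, eq_top_iff]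
      intro y _
      refine ⟨Lagrange.interpolate Finset.univ α (fun i => y i / v i), ?_, ?_⟩
      · rw [SetLike.mem_coe, Polynomial.mem_degreeLT]
        refine lt_trans (Lagrange.degree_interpolate_lt _ hα.injOn) ?_
        rw [Finset.card_univ, Fintype.card_fin]
        exact_mod_cast hKn
      · funext i
        show v i * Polynomial.eval (α i) _ = y i
        rw [Lagrange.eval_interpolate_at_node _ hα.injOn (Finset.mem_univ i)]
        rw [mul_comm, div_mul_cancel₀ _ (hv i)]
    have hdim : Module.finrank F D = n := by
      rw [htop, finrank_top, Module.finrank_fin_fun]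
    have hC2n : 2 * k - 1 + δ ≤ n := by
      have h := Submodule.finrank_le (R := F) (schurCode C C)
      rwa [Module.finrank_fin_fun, hC2] at h
    rw [hdim]
    have h2 : 2 * k + δ ≤ 2 * n := by omega
    have h2' : (2 * k + δ : ℚ) ≤ 2 * n := by exact_mod_cast h2
    push_cast at h2'
    linarith
end

section
/- Let n, k, ℓ, r be as in the crypto family: r = ⌈(n+1)/(ℓ+2)⌉ + 2, t_i = (i+1)(r−2) − k + 2 and h_i = r − 1 + i for i = 1,...,ℓ, with parameter constraints guaranteeing 1 ≤ t_i ≤ n − k and 0 ≤ h_i < k. Let C ∈ F^{n,k}_ℓ be a corresponding twisted RS code. Then dim(C²) = n. -/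
open Polynomial

lemma evalVec_apply {F : Type*} [Field F] {n : ℕ} (α : Fin n → F) (p : F[X]) (i : Fin n) :
    evalVec α p i = p.eval (α i) := rfl

lemma evalVec_mul_mem_schur {F : Type*} [Field F] {n k ℓ : ℕ} (α : Fin n → F)
    (t h : Fin ℓ → ℕ) (η : Fin ℓ → F) {p q : F[X]}
    (hp : p ∈ twistedSet k ℓ t h η) (hq : q ∈ twistedSet k ℓ t h η) :
    evalVec α (p * q) ∈ schurCode (twistedCode n k ℓ α t h η) (twistedCode n k ℓ α t h η) := by
  apply Submodule.subset_span
  exact ⟨evalVec α p, Submodule.subset_span ⟨p, hp, rfl⟩,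
    evalVec α q, Submodule.subset_span ⟨q, hq, rfl⟩,
    funext fun i => by simp [evalVec_apply]⟩

lemma X_pow_mem_twistedSet {F : Type*} [Field F] {k ℓ : ℕ} (t h : Fin ℓ → ℕ) (η : Fin ℓ → F)
    {m : ℕ} (hmk : m < k) (hmh : ∀ j, m < h j) :
    (X ^ m : F[X]) ∈ twistedSet k ℓ t h η := by
  refine ⟨fun i => if i = m then 1 else 0, ?_⟩
  have h1 : ∀ i ∈ Finset.range k,
      Polynomial.C (if i = m then (1:F) else 0) * X ^ i = if i = m then X ^ m else 0 := by
    intro i _; split <;> simp_all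
  rw [Finset.sum_congr rfl h1, Finset.sum_ite_eq' (Finset.range k) m fun _ => X ^ m,
    if_pos (Finset.mem_range.2 hmk)]
  have h2 : ∀ j : Fin ℓ, (if h j = m then (1:F) else 0) = 0 := by
    intro j; rw [if_neg (hmh j).ne']
  simp [h2]

lemma twistPoly_mem_twistedSet {F : Type*} [Field F] {k ℓ : ℕ} (t h : Fin ℓ → ℕ) (η : Fin ℓ → F)
    (hinj : Function.Injective h) (j : Fin ℓ) (hjk : h j < k) :
    (X ^ (h j) + Polynomial.C (η j) * X ^ (k - 1 + t j) : F[X]) ∈ twistedSet k ℓ t h η := by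
  refine ⟨fun i => if i = h j then 1 else 0, ?_⟩
  have h1 : ∀ i ∈ Finset.range k,
      Polynomial.C (if i = h j then (1:F) else 0) * X ^ i = if i = h j then X ^ (h j) else 0 := by
    intro i _; split <;> simp_all
  rw [Finset.sum_congr rfl h1, Finset.sum_ite_eq' (Finset.range k) (h j) fun _ => X ^ (h j),
    if_pos (Finset.mem_range.2 hjk)]
  have h2 : ∀ j' : Fin ℓ,
      Polynomial.C (η j' * if h j' = h j then (1:F) else 0) * X ^ (k - 1 + t j')
        = if j' = j then Polynomial.C (η j) * X ^ (k - 1 + t j) else 0 := by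
    intro j'
    by_cases hjj : j' = j
    · subst hjj; simp
    · rw [if_neg (fun hh => hjj (hinj hh)), if_neg hjj]; simp
  rw [Finset.sum_congr rfl fun j' _ => h2 j', Fintype.sum_ite_eq' j fun _ => _]

lemma coverage_aux {ℓ m d n : ℕ} (hℓ : 0 < ℓ) (hm : 0 < m) (hn : n + 1 ≤ (ℓ + 2) * m)
    (hd1 : 2 * m + 1 ≤ d) (hd2 : d < n) :
    ∃ j a : ℕ, j < ℓ ∧ a ≤ m + 1 ∧ d = (j + 2) * m + 1 + a := by
  obtain ⟨ℓ', rfl⟩ : ∃ ℓ', ℓ = ℓ' + 1 := ⟨ℓ - 1, by omega⟩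
  set e := d - (2 * m + 1) with he
  by_cases hc : e / m ≤ ℓ'
  · refine ⟨e / m, e % m, by omega, ?_, ?_⟩
    · have := Nat.mod_lt e hm; omega
    · have h1 := Nat.div_add_mod e m
      have h2 : (e / m + 2) * m = m * (e / m) + 2 * m := by ring
      omega
  · refine ⟨ℓ', d - ((ℓ' + 2) * m + 1), by omega, ?_, ?_⟩ <;>
    · have hge : ℓ' * m ≤ e := by
        have h0 : ℓ' ≤ e / m := by omega
        calc ℓ' * m ≤ e / m * m := Nat.mul_le_mul_right m h0
        _ ≤ e := Nat.div_mul_le_self e m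
      have h2 : (ℓ' + 2) * m = ℓ' * m + 2 * m := by ring
      have h3 : (ℓ' + 1 + 2) * m = ℓ' * m + 3 * m := by ring
      omega

/-- For a twisted RS code `C ∈ F^{n,k}_ℓ` of the crypto family, with
`r = ⌈(n+1)/(ℓ+2)⌉ + 2`, twists `tᵢ = (i+1)(r-2) - k + 2` and hooks
`hᵢ = r - 1 + i` (here `0`-indexed: `i = j + 1` for `j : Fin ℓ`), the Schur
square has full dimension: `dim(C²) = n`. -/
theorem schurSquare_cryptoFamily_eq_n {F : Type*} [Field F] [Fintype F]
    {n k ℓ : ℕ} (hk : 0 < k) (hkhalf : 2 * k + 4 ≤ n) (hℓ : 0 < ℓ)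
    (K : Fin (ℓ + 1) → Subfield F)
    (hchain : ∀ i : Fin ℓ, K i.castSucc < K i.succ)
    (htop : K (Fin.last ℓ) = ⊤)
    (α : Fin n → F) (hα : Function.Injective α)
    (hαK : ∀ i, α i ∈ K 0) (hα0 : ∀ i, α i ≠ 0)
    (r : ℕ) (hr : r = (n + 1 + (ℓ + 2) - 1) / (ℓ + 2) + 2)
    (t h : Fin ℓ → ℕ)
    (htdef : ∀ j : Fin ℓ, t j = ((j : ℕ) + 2) * (r - 2) + 2 - k)
    (hhdef : ∀ j : Fin ℓ, h j = r + (j : ℕ))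
    (ht1 : ∀ j, 1 ≤ t j) (ht2 : ∀ j, t j ≤ n - k) (hh : ∀ j, h j < k)
    (η : Fin ℓ → F)
    (hη : ∀ j : Fin ℓ, η j ∈ K j.succ ∧ η j ∉ K j.castSucc) :
    Module.finrank F
      (schurCode (twistedCode n k ℓ α t h η) (twistedCode n k ℓ α t h η)) = n := by
  obtain ⟨m, hmdef⟩ : ∃ m', m' = (n + 1 + (ℓ + 2) - 1) / (ℓ + 2) := ⟨_, rfl⟩
  have hrm : r = m + 2 := by rw [hr, ← hmdef]
  have hn1 : n + 1 ≤ (ℓ + 2) * m := by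
    have h1 := Nat.div_add_mod (n + 1 + (ℓ + 2) - 1) (ℓ + 2)
    have h2 : (n + 1 + (ℓ + 2) - 1) % (ℓ + 2) < ℓ + 2 := Nat.mod_lt _ (by omega)
    rw [← hmdef] at h1
    generalize hA : (ℓ + 2) * m = A at h1 ⊢
    omega
  have hkbig : r + (ℓ - 1) < k := by
    have := hh ⟨ℓ - 1, by omega⟩
    rw [hhdef] at this
    simpa using this
  have hm2 : 2 ≤ m := by
    by_contra hlt
    have hm01 : m = 0 ∨ m = 1 := by omega
    rcases hm01 with rfl | rfl <;> simp at hn1 <;> omega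
  have hinj : Function.Injective h := by
    intro a b hab
    rw [hhdef a, hhdef b] at hab
    exact Fin.ext (by omega)
  have htval : ∀ j : Fin ℓ, k - 1 + t j = ((j : ℕ) + 2) * m + 1 := by
    intro j
    have h1 := htdef j
    have h2 := ht1 j
    have hr2 : r - 2 = m := by omega
    rw [hr2] at h1
    generalize hB : ((j : ℕ) + 2) * m = B at h1 ⊢
    omega
  have hmh' : ∀ a : ℕ, a ≤ m + 1 → ∀ j : Fin ℓ, a < h j := by
    intro a ha j; rw [hhdef]; omega
  have hak : ∀ a : ℕ, a ≤ m + 1 → a < k := by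
    intro a ha
    have := hh ⟨0, hℓ⟩
    rw [hhdef] at this
    simp at this
    omega
  set S := schurCode (twistedCode n k ℓ α t h η) (twistedCode n k ℓ α t h η) with hSdef
  have key : ∀ d, d < n → evalVec α (X ^ d : F[X]) ∈ S := by
    intro d
    induction d using Nat.strong_induction_on with
    | _ d ih =>
      intro hd
      by_cases hcase : d ≤ 2 * m + 2
      · have ha : min d (m + 1) ≤ m + 1 := min_le_right _ _
        have hb : d - min d (m + 1) ≤ m + 1 := by omega
        have hmem := evalVec_mul_mem_schur α t h η
          (X_pow_mem_twistedSet t h η (hak _ ha) (hmh' _ ha))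
          (X_pow_mem_twistedSet t h η (hak _ hb) (hmh' _ hb))
        rw [← pow_add, Nat.add_sub_cancel' (min_le_left d (m + 1))] at hmem
        exact hmem
      · obtain ⟨j, a, hjℓ, ham, hdd⟩ := coverage_aux hℓ (by omega) hn1 (by omega) hd
        set j' : Fin ℓ := ⟨j, hjℓ⟩ with hj'
        have hP := twistPoly_mem_twistedSet t h η hinj j' (hh j')
        have hXa := X_pow_mem_twistedSet t h η (hak a ham) (hmh' a ham)
        have hmem := evalVec_mul_mem_schur α t h η hP hXa
        have hkt : k - 1 + t j' + a = d := by
          have h1 := htval j'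
          have h2 : ((j' : ℕ) + 2) * m = (j + 2) * m := rfl
          rw [h2] at h1
          generalize hB : (j + 2) * m = B at h1 hdd
          omega
        have hexp : (X ^ (h j') + Polynomial.C (η j') * X ^ (k - 1 + t j')) * X ^ a
            = X ^ (h j' + a) + Polynomial.C (η j') * X ^ d := by
          rw [add_mul, mul_assoc, ← pow_add, ← pow_add, hkt]
        rw [hexp, map_add] at hmem
        have hsm : evalVec α (Polynomial.C (η j') * X ^ d) = η j' • evalVec α (X ^ d : F[X]) := by
          rw [← smul_eq_C_mul, map_smul]
        rw [hsm] at hmem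
        have hlow : h j' + a < d := by
          have h1 : h j' = m + 2 + j := by rw [hhdef, hrm]
          have e1 : (j + 2) * m = j * m + 2 * m := by ring
          have e2 : 2 * j ≤ j * m := by
            calc 2 * j = j * 2 := by ring
            _ ≤ j * m := Nat.mul_le_mul_left j hm2
          rw [e1] at hdd
          generalize j * m = B at hdd e2
          omega
        have hη0 : η j' ≠ 0 := fun h0 => (hη j').2 (h0 ▸ (K j'.castSucc).zero_mem)
        have h1 : η j' • evalVec α (X ^ d : F[X]) ∈ S := by
          have := S.sub_mem hmem (ih _ hlow (hlow.trans hd))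
          simpa using this
        have h2 := S.smul_mem (η j')⁻¹ h1
        rwa [inv_smul_smul₀ hη0] at h2
  haveI : Nonempty (Fin n) := ⟨⟨0, by omega⟩⟩
  have hv : LinearIndependent F (fun d : Fin n => evalVec α (X ^ (d : ℕ) : F[X])) := by
    have hfun : (fun d : Fin n => evalVec α (X ^ (d : ℕ) : F[X]))
        = fun d : Fin n => (Matrix.vandermonde α).transpose d := by
      funext d i
      simp [evalVec_apply, Matrix.vandermonde_apply, Matrix.transpose_apply]
    rw [hfun]
    refine Matrix.linearIndependent_cols_iff_isUnit.2 ?_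
    rw [Matrix.isUnit_iff_isUnit_det]
    exact isUnit_iff_ne_zero.2 (Matrix.det_vandermonde_ne_zero_iff.2 hα)
  have hspan : Submodule.span F (Set.range fun d : Fin n => evalVec α (X ^ (d : ℕ) : F[X])) = ⊤ :=
    hv.span_eq_top_of_card_eq_finrank (by simp)
  have hStop : S = ⊤ := by
    refine le_antisymm le_top ?_
    rw [← hspan]
    refine Submodule.span_le.2 ?_
    rintro x ⟨d, rfl⟩
    exact key d d.isLt
  rw [hStop]
  simp
end

section
/- If C is an [n,k] MDS code with k > n/2, then dim(C²) = n. -/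
open Polynomial

open Module in
/-- In an MDS code, for any coordinate set `A` of size `k - 1` there is a codeword whose
support is exactly the complement of `A`. -/
lemma exists_support_compl {F : Type*} [Field F] {n k : ℕ}
    (C : Submodule F (Fin n → F)) (hdim : Module.finrank F C = k)
    (hw : ∀ c ∈ C, c ≠ 0 → n - k + 1 ≤ wt c) (hk : 0 < k) (hkn : k ≤ n)
    (A : Finset (Fin n)) (hA : A.card = k - 1) :
    ∃ c ∈ C, ∀ j, c j ≠ 0 ↔ j ∉ A := by
  classical
  -- the restriction map to coordinates in A
  let φ : C →ₗ[F] (A → F) :=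
    LinearMap.pi fun a => (LinearMap.proj (a : Fin n)).comp C.subtype
  have hlt : Module.finrank F (A → F) < Module.finrank F C := by
    rw [hdim, Module.finrank_pi, Fintype.card_coe, hA]
    omega
  have hker : LinearMap.ker φ ≠ ⊥ := by
    intro h
    have hinj : Function.Injective φ := LinearMap.ker_eq_bot.mp h
    exact absurd (LinearMap.finrank_le_finrank_of_injective hinj) (not_le.mpr hlt)
  obtain ⟨c, hcker, hc0⟩ := Submodule.exists_mem_ne_zero_of_ne_bot hker
  have hczero : ∀ a ∈ A, (c : Fin n → F) a = 0 := by
    intro a ha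
    have := LinearMap.mem_ker.mp hcker
    exact congrFun this ⟨a, ha⟩
  have hc0' : (c : Fin n → F) ≠ 0 := by
    intro h
    exact hc0 (Subtype.ext h)
  -- support as a finset
  set S : Finset (Fin n) := Finset.univ.filter (fun j => (c : Fin n → F) j ≠ 0) with hS
  have hwt : wt (c : Fin n → F) = S.card := by
    rw [wt, Nat.card_eq_fintype_card, Fintype.card_subtype]
  have hSsub : S ⊆ Aᶜ := by
    intro j hj
    rw [Finset.mem_compl]
    intro hjA
    exact (Finset.mem_filter.mp hj).2 (hczero j hjA)
  have hcardAc : Aᶜ.card = n - (k - 1) := by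
    rw [Finset.card_compl, hA, Fintype.card_fin]
  have hle : Aᶜ.card ≤ S.card := by
    have := hw c c.2 hc0'
    rw [hwt] at this
    omega
  have hSeq : S = Aᶜ := Finset.eq_of_subset_of_card_le hSsub hle
  refine ⟨c, c.2, fun j => ?_⟩
  constructor
  · intro hj
    have : j ∈ S := Finset.mem_filter.mpr ⟨Finset.mem_univ j, hj⟩
    rw [hSeq, Finset.mem_compl] at this
    exact this
  · intro hj
    have : j ∈ S := by rw [hSeq, Finset.mem_compl]; exact hj
    exact (Finset.mem_filter.mp this).2

/-- If `C` is an `[n,k]` MDS code with `k > n/2`, then its Schur square has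
full dimension `n`. -/
theorem schurSquare_eq_n_of_MDS_high_rate {F : Type*} [Field F] [Fintype F]
    {n k : ℕ} (C : Submodule F (Fin n → F))
    (hdim : Module.finrank F C = k) (hrate : n < 2 * k)
    (hMDS : (∀ c ∈ C, c ≠ 0 → n - k + 1 ≤ wt c) ∧
      ∃ c ∈ C, c ≠ 0 ∧ wt c = n - k + 1) :
    Module.finrank F (schurCode C C) = n := by
  classical
  have hk : 0 < k := by omega
  have hkn : k ≤ n := by
    have h1 : Module.finrank F C ≤ Module.finrank F (Fin n → F) := C.finrank_le
    rwa [hdim, Module.finrank_fin_fun] at h1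
  -- every standard basis vector lies in the Schur square
  have hbasis : ∀ i : Fin n, (fun j => if i = j then (1 : F) else 0) ∈ schurCode C C := by
    intro i
    -- choose A ⊆ {i}ᶜ of size k-1
    have hcompl : ({i}ᶜ : Finset (Fin n)).card = n - 1 := by
      rw [Finset.card_compl, Finset.card_singleton, Fintype.card_fin]
    obtain ⟨A, hAsub, hAcard⟩ :=
      Finset.exists_subset_card_eq (s := ({i}ᶜ : Finset (Fin n))) (n := k - 1)
        (by omega)
    -- choose B with {i}ᶜ \ A ⊆ B ⊆ {i}ᶜ, of size k-1
    have hdiffcard : (({i}ᶜ : Finset (Fin n)) \ A).card ≤ k - 1 := by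
      have := Finset.card_sdiff_of_subset hAsub
      omega
    obtain ⟨B, hBsub1, hBsub2, hBcard⟩ :=
      Finset.exists_subsuperset_card_eq (Finset.sdiff_subset (s := ({i}ᶜ : Finset (Fin n)))
        (t := A)) hdiffcard (by omega)
    obtain ⟨c, hcC, hc⟩ := exists_support_compl C hdim hMDS.1 hk hkn A hAcard
    obtain ⟨c', hc'C, hc'⟩ := exists_support_compl C hdim hMDS.1 hk hkn B hBcard
    set z : Fin n → F := fun j => c j * c' j with hz
    have hzmem : z ∈ schurCode C C :=
      Submodule.subset_span ⟨c, hcC, c', hc'C, rfl⟩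
    have hiA : i ∉ A := fun h => by simpa using hAsub h
    have hiB : i ∉ B := fun h => by simpa using hBsub2 h
    have hzi : z i ≠ 0 := mul_ne_zero ((hc i).mpr hiA) ((hc' i).mpr hiB)
    have hzj : ∀ j, j ≠ i → z j = 0 := by
      intro j hj
      by_cases hjA : j ∈ A
      · have : c j = 0 := by
          by_contra h
          exact (hc j).mp h hjA
        simp [hz, this]
      · have hjB : j ∈ B := hBsub1 (by simp [hjA, hj])
        have : c' j = 0 := by
          by_contra h
          exact (hc' j).mp h hjB
        simp [hz, this]
    have : (fun j => if i = j then (1 : F) else 0) = (z i)⁻¹ • z := by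
      funext j
      by_cases h : i = j
      · subst h
        simp [inv_mul_cancel₀ hzi]
      · simp [h, hzj j (fun hh => h hh.symm)]
    rw [this]
    exact Submodule.smul_mem _ _ hzmem
  have htop : schurCode C C = ⊤ := by
    rw [eq_top_iff]
    intro x _
    rw [pi_eq_sum_univ x]
    exact Submodule.sum_mem _ fun i _ => Submodule.smul_mem _ _ (hbasis i)
  rw [htop, finrank_top, Module.finrank_fin_fun]
end
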